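/- Let (a_n)_{n≥1} be a non-constant monotone decreasing sequence of positive reals with a_1 = 1, let ℓ = min{k ≥ 1 : a_k < 1}, and let F(z) = 1 - (1-z) exp(Σ_{n≥1} (a_n/n) z^n), which extends continuously to the closed unit disk since its Taylor coefficients c_n are nonnegative with Σ c_n ≤ 1. Then for every z in the closed unit disk with z ∉ {0,1}, |F(z)| < |z|^ℓ. -/

import Mathlib

noncomputable def stmt5e (a : ℕ → ℝ) : ℕ → ℝ
  | 0 => 1
  | n+1 => (∑ k ∈ Finset.range (n+1), a (k+1) * stmt5e a (n - k)) / (n+1)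
decreasing_by exact Nat.lt_succ_of_le (Nat.sub_le n k)

lemma stmt5e_zero (a : ℕ → ℝ) : stmt5e a 0 = 1 := by simp [stmt5e]

lemma stmt5e_succ (a : ℕ → ℝ) (n : ℕ) :
    (n+1 : ℝ) * stmt5e a (n+1) = ∑ k ∈ Finset.range (n+1), a (k+1) * stmt5e a (n - k) := by
  rw [stmt5e]
  field_simp

lemma stmt5e_nonneg (a : ℕ → ℝ) (ha : ∀ n, 1 ≤ n → 0 < a n) (n : ℕ) : 0 ≤ stmt5e a n := by
  induction n using Nat.strong_induction_on with
  | _ n ih =>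
    match n with
    | 0 => simp [stmt5e]
    | n+1 =>
      rw [stmt5e]
      apply div_nonneg _ (by positivity)
      apply Finset.sum_nonneg
      intro k hk
      exact mul_nonneg (ha _ (Nat.le_add_left 1 k)).le
        (ih _ (Nat.lt_succ_of_le (Nat.sub_le n k)))

lemma stmt5e_one (a : ℕ → ℝ) (ha1 : a 1 = 1) : stmt5e a 1 = 1 := by
  have := stmt5e_succ a 0
  simp [stmt5e_zero, ha1] at this
  linarith

lemma stmt5e_diff (a : ℕ → ℝ) (ha1 : a 1 = 1) (n : ℕ) :
    ((n:ℝ)+2) * (stmt5e a (n+1) - stmt5e a (n+2)) =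
      ∑ j ∈ Finset.range (n+1), (a (j+1) - a (j+2)) * stmt5e a (n - j) := by
  have h2 := stmt5e_succ a (n+1)
  have h1 := stmt5e_succ a n
  rw [Finset.sum_range_succ'] at h2
  simp only [Nat.sub_zero, ha1, one_mul, Nat.succ_sub_succ_eq_sub] at h2
  have : ((n:ℝ)+1+1) * stmt5e a (n+2) =
      (∑ j ∈ Finset.range (n+1), a (j+2) * stmt5e a (n - j)) + stmt5e a (n+1) := by
    convert h2 using 3 <;> (push_cast; ring)
  have expand : ∑ j ∈ Finset.range (n+1), (a (j+1) - a (j+2)) * stmt5e a (n - j)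
      = (∑ j ∈ Finset.range (n+1), a (j+1) * stmt5e a (n - j))
        - ∑ j ∈ Finset.range (n+1), a (j+2) * stmt5e a (n - j) := by
    rw [← Finset.sum_sub_distrib]
    exact Finset.sum_congr rfl (fun j _ => by ring)
  rw [expand, ← h1]
  nlinarith [this]

lemma stmt5e_antitone (a : ℕ → ℝ) (ha_pos : ∀ n, 1 ≤ n → 0 < a n)
    (ha_dec : ∀ n, 1 ≤ n → a (n + 1) ≤ a n) (ha1 : a 1 = 1) (n : ℕ) :
    stmt5e a (n+1) ≤ stmt5e a n := by
  match n with
  | 0 => rw [stmt5e_one a ha1, stmt5e_zero]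
  | n+1 =>
    have h := stmt5e_diff a ha1 n
    have hsum : 0 ≤ ∑ j ∈ Finset.range (n+1), (a (j+1) - a (j+2)) * stmt5e a (n - j) := by
      apply Finset.sum_nonneg
      intro j _
      exact mul_nonneg (by linarith [ha_dec (j+1) (Nat.le_add_left 1 j)])
        (stmt5e_nonneg a ha_pos _)
    nlinarith [h]

lemma stmt5e_le_one (a : ℕ → ℝ) (ha_pos : ∀ n, 1 ≤ n → 0 < a n)
    (ha_dec : ∀ n, 1 ≤ n → a (n + 1) ≤ a n) (ha1 : a 1 = 1) (n : ℕ) :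
    stmt5e a n ≤ 1 := by
  induction n with
  | zero => simp [stmt5e_zero]
  | succ n ih => exact le_trans (stmt5e_antitone a ha_pos ha_dec ha1 n) ih

lemma stmt5e_eq_one (a : ℕ → ℝ) (m : ℕ)
    (hone : ∀ k, 1 ≤ k → k < m+2 → a k = 1) (n : ℕ) (hn : n < m+2) :
    stmt5e a n = 1 := by
  induction n using Nat.strong_induction_on with
  | _ n ih =>
    match n with
    | 0 => exact stmt5e_zero a
    | n+1 =>
      have h := stmt5e_succ a n
      have : ∀ k ∈ Finset.range (n+1), a (k+1) * stmt5e a (n - k) = 1 := by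
        intro k hk
        rw [Finset.mem_range] at hk
        rw [hone (k+1) (Nat.le_add_left 1 k) (by omega),
          ih (n-k) (by omega) (by omega), one_mul]
      rw [Finset.sum_congr rfl this, Finset.sum_const, Finset.card_range] at h
      simp only [nsmul_eq_mul, mul_one] at h
      push_cast at h
      have hn1 : ((n:ℝ)+1) ≠ 0 := by positivity
      exact mul_left_cancel₀ hn1 (by rw [h]; ring)

lemma stmt5e_gap1 (a : ℕ → ℝ) (m : ℕ)
    (hone : ∀ k, 1 ≤ k → k < m+2 → a k = 1) :
    stmt5e a (m+1) - stmt5e a (m+2) = (1 - a (m+2)) / (m+2) := by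
  have h := stmt5e_succ a (m+1)
  rw [Finset.sum_range_succ] at h
  have : ∀ k ∈ Finset.range (m+1), a (k+1) * stmt5e a (m+1 - k) = 1 := by
    intro k hk
    rw [Finset.mem_range] at hk
    rw [hone (k+1) (Nat.le_add_left 1 k) (by omega),
      stmt5e_eq_one a m hone (m+1-k) (by omega), one_mul]
  rw [Finset.sum_congr rfl this, Finset.sum_const, Finset.card_range] at h
  simp only [Nat.sub_self, stmt5e_zero, mul_one, nsmul_eq_mul] at h
  rw [stmt5e_eq_one a m hone (m+1) (by omega)]
  have hm2 : (0:ℝ) < (m:ℝ)+2 := by positivity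
  have hcast : ((m+1:ℕ):ℝ) + 1 = (m:ℝ)+2 := by push_cast; ring
  rw [hcast] at h
  field_simp
  push_cast at h ⊢
  linarith [h]

lemma stmt5e_gap2 (a : ℕ → ℝ) (m : ℕ) (ha_pos : ∀ n, 1 ≤ n → 0 < a n)
    (ha_dec : ∀ n, 1 ≤ n → a (n + 1) ≤ a n) (ha1 : a 1 = 1)
    (hone : ∀ k, 1 ≤ k → k < m+2 → a k = 1) :
    (1 - a (m+2)) / (m+3) ≤ stmt5e a (m+2) - stmt5e a (m+3) := by
  have h := stmt5e_diff a ha1 (m+1)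
  have hsingle : (1 - a (m+2)) * 1 ≤
      ∑ j ∈ Finset.range (m+2), (a (j+1) - a (j+2)) * stmt5e a (m+1 - j) := by
    have hmem : m ∈ Finset.range (m+2) := by simp
    have hterm : (a (m+1) - a (m+2)) * stmt5e a (m+1-m) = (1 - a (m+2)) * 1 := by
      have h1 : a (m+1) = 1 := hone (m+1) (by omega) (by omega)
      have h2 : m+1-m = 1 := by omega
      rw [h1, h2, stmt5e_one a ha1]
    rw [← hterm]
    apply Finset.single_le_sum (f := fun j => (a (j+1) - a (j+2)) * stmt5e a (m+1-j)) _ hmem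
    intro j _
    exact mul_nonneg (by linarith [ha_dec (j+1) (Nat.le_add_left 1 j)])
      (stmt5e_nonneg a ha_pos _)
  have hm3 : (0:ℝ) < (m:ℝ)+3 := by positivity
  rw [div_le_iff₀ hm3]
  have : ((m+1:ℕ):ℝ) + 2 = (m:ℝ)+3 := by push_cast; ring
  rw [this] at h
  nlinarith [h, hsingle]

lemma stmt5_exp (a : ℕ → ℝ) (ha_pos : ∀ n, 1 ≤ n → 0 < a n)
    (ha_dec : ∀ n, 1 ≤ n → a (n + 1) ≤ a n) (ha1 : a 1 = 1)
    (ha_le1 : ∀ n, 1 ≤ n → a n ≤ 1) (z : ℂ) (hz : ‖z‖ < 1) :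
    Complex.exp (∑' n : ℕ, (a (n + 1) / (n + 1) : ℂ) * z ^ (n + 1))
      = ∑' n : ℕ, (stmt5e a n : ℂ) * z ^ n := by
  have he0 : ∀ n, 0 ≤ stmt5e a n := stmt5e_nonneg a ha_pos
  have he1 : ∀ n, stmt5e a n ≤ 1 := stmt5e_le_one a ha_pos ha_dec ha1
  set r : ℝ := (‖z‖ + 1) / 2 with hrdef
  have hr0 : 0 < r := by positivity
  have hr1 : r < 1 := by rw [hrdef]; linarith
  have hzr : ‖z‖ < r := by rw [hrdef]; linarith
  set t : Set ℂ := Metric.ball (0 : ℂ) r with htdef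
  have ht : IsOpen t := Metric.isOpen_ball
  have htc : IsPreconnected t := (convex_ball (0:ℂ) r).isPreconnected
  have hmem : ∀ w : ℂ, w ∈ t ↔ ‖w‖ < r := fun w => mem_ball_zero_iff
  have h0t : (0:ℂ) ∈ t := (hmem 0).2 (by simpa using hr0)
  have hzt : z ∈ t := (hmem z).2 hzr
  have hgeom : Summable (fun n : ℕ => r ^ n) := summable_geometric_of_lt_one hr0.le hr1
  have hpow : Summable (fun n : ℕ => (n:ℝ) * r ^ n) := by
    simpa using summable_pow_mul_geometric_of_norm_lt_one 1
      (r := r) (by rwa [Real.norm_eq_abs, abs_of_pos hr0])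
  have hu1 : Summable (fun n : ℕ => (n:ℝ) * r ^ (n-1)) := by
    rw [← summable_nat_add_iff 1]
    simp only [Nat.add_sub_cancel]
    exact (hpow.add hgeom).congr (fun n => by push_cast; ring)
  -- derivative of S-terms
  have hSterm : ∀ (n:ℕ) (w:ℂ),
      HasDerivAt (fun y : ℂ => (stmt5e a n : ℂ) * y ^ n)
        ((stmt5e a n : ℂ) * ((n:ℂ) * w ^ (n-1))) w :=
    fun n w => (hasDerivAt_pow n w).const_mul _
  have hSbound : ∀ (n:ℕ) (w:ℂ), w ∈ t →
      ‖(stmt5e a n : ℂ) * ((n:ℂ) * w ^ (n-1))‖ ≤ (n:ℝ) * r ^ (n-1) := by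
    intro n w hw
    have hwr : ‖w‖ ≤ r := ((hmem w).1 hw).le
    rw [norm_mul, norm_mul, norm_pow, Complex.norm_natCast, Complex.norm_real,
      Real.norm_eq_abs, abs_of_nonneg (he0 n)]
    calc stmt5e a n * ((n:ℝ) * ‖w‖ ^ (n-1)) ≤ 1 * ((n:ℝ) * r ^ (n-1)) := by
          apply mul_le_mul (he1 n) _ (by positivity) (by norm_num)
          exact mul_le_mul_of_nonneg_left (pow_le_pow_left₀ (norm_nonneg w) hwr _) (by positivity)
      _ = (n:ℝ) * r ^ (n-1) := one_mul _
  have hS0 : Summable (fun n : ℕ => (stmt5e a n : ℂ) * (0:ℂ) ^ n) := by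
    apply Summable.of_norm_bounded hgeom
    intro n
    match n with
    | 0 => simp [stmt5e_zero]
    | n+1 =>
      simp only [zero_pow (Nat.succ_ne_zero n), mul_zero, norm_zero]
      positivity
  have hS : ∀ w ∈ t, HasDerivAt (fun y : ℂ => ∑' n : ℕ, (stmt5e a n : ℂ) * y ^ n)
      (∑' n : ℕ, (stmt5e a n : ℂ) * ((n:ℂ) * w ^ (n-1))) w :=
    fun w hw => hasDerivAt_tsum_of_isPreconnected hu1 ht htc
      (fun n y _ => hSterm n y) hSbound h0t hS0 hw
  -- derivative of g-terms
  have hgterm : ∀ (n:ℕ) (w:ℂ),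
      HasDerivAt (fun y : ℂ => (a (n + 1) / (n + 1) : ℂ) * y ^ (n + 1))
        ((a (n+1) : ℂ) * w ^ n) w := by
    intro n w
    have h := (hasDerivAt_pow (n+1) w).const_mul ((a (n + 1) / (n + 1) : ℂ))
    refine h.congr_deriv ?_
    have hne : ((n:ℂ)+1) ≠ 0 := Nat.cast_add_one_ne_zero n
    simp only [Nat.add_sub_cancel]
    push_cast
    field_simp
  have hgbound : ∀ (n:ℕ) (w:ℂ), w ∈ t → ‖(a (n+1) : ℂ) * w ^ n‖ ≤ r ^ n := by
    intro n w hw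
    have hwr : ‖w‖ ≤ r := ((hmem w).1 hw).le
    rw [norm_mul, norm_pow, Complex.norm_real, Real.norm_eq_abs,
      abs_of_nonneg (ha_pos (n+1) (by omega)).le]
    calc a (n+1) * ‖w‖ ^ n ≤ 1 * r ^ n := by
          apply mul_le_mul (ha_le1 (n+1) (by omega)) (pow_le_pow_left₀ (norm_nonneg w) hwr _)
            (by positivity) (by norm_num)
      _ = r ^ n := one_mul _
  have hg0 : Summable (fun n : ℕ => (a (n + 1) / (n + 1) : ℂ) * (0:ℂ) ^ (n + 1)) := by
    have : (fun n : ℕ => (a (n + 1) / (n + 1) : ℂ) * (0:ℂ) ^ (n + 1)) = fun _ => 0 := by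
      funext n; simp
    rw [this]; exact summable_zero
  have hg : ∀ w ∈ t, HasDerivAt (fun y : ℂ => ∑' n : ℕ, (a (n + 1) / (n + 1) : ℂ) * y ^ (n + 1))
      (∑' n : ℕ, (a (n+1) : ℂ) * w ^ n) w :=
    fun w hw => hasDerivAt_tsum_of_isPreconnected hgeom ht htc
      (fun n y _ => hgterm n y) hgbound h0t hg0 hw
  -- summability of the various series on t
  have hSnorm : ∀ w ∈ t, Summable (fun n : ℕ => ‖(stmt5e a n : ℂ) * w ^ n‖) := by
    intro w hw
    apply Summable.of_nonneg_of_le (fun n => norm_nonneg _) _ hgeom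
    intro n
    have hwr : ‖w‖ ≤ r := ((hmem w).1 hw).le
    rw [norm_mul, norm_pow, Complex.norm_real, Real.norm_eq_abs, abs_of_nonneg (he0 n)]
    calc stmt5e a n * ‖w‖ ^ n ≤ 1 * r ^ n :=
          mul_le_mul (he1 n) (pow_le_pow_left₀ (norm_nonneg w) hwr _) (by positivity) (by norm_num)
      _ = r ^ n := one_mul _
  have hAnorm : ∀ w ∈ t, Summable (fun n : ℕ => ‖(a (n+1) : ℂ) * w ^ n‖) := by
    intro w hw
    apply Summable.of_nonneg_of_le (fun n => norm_nonneg _) (fun n => hgbound n w hw) hgeom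
  -- the derivative of S equals A * S
  have hkey : ∀ w ∈ t,
      (∑' n : ℕ, (stmt5e a n : ℂ) * ((n:ℂ) * w ^ (n-1)))
        = (∑' n : ℕ, (a (n+1) : ℂ) * w ^ n) * (∑' n : ℕ, (stmt5e a n : ℂ) * w ^ n) := by
    intro w hw
    rw [tsum_mul_tsum_eq_tsum_sum_range_of_summable_norm (hAnorm w hw) (hSnorm w hw)]
    have hsummable : Summable (fun n : ℕ => (stmt5e a n : ℂ) * ((n:ℂ) * w ^ (n-1))) := by
      apply Summable.of_norm_bounded hu1 (fun n => hSbound n w hw)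
    rw [Summable.tsum_eq_zero_add hsummable]
    simp only [Nat.cast_zero, zero_mul, mul_zero, zero_add, Nat.add_sub_cancel]
    apply tsum_congr
    intro n
    have hinner : ∀ k ∈ Finset.range (n+1),
        ((a (k+1) : ℂ) * w ^ k) * ((stmt5e a (n-k) : ℂ) * w ^ (n-k))
          = ((a (k+1) * stmt5e a (n-k) : ℝ) : ℂ) * w ^ n := by
      intro k hk
      rw [Finset.mem_range] at hk
      have : w ^ k * w ^ (n-k) = w ^ n := by
        rw [← pow_add]; congr 1; omega
      push_cast
      rw [← this]; ring
    rw [Finset.sum_congr rfl hinner, ← Finset.sum_mul, ← Complex.ofReal_sum,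
      ← stmt5e_succ a n]
    push_cast
    ring
  -- the function φ = S * exp(-g) has zero derivative on t
  set g : ℂ → ℂ := fun y => ∑' n : ℕ, (a (n + 1) / (n + 1) : ℂ) * y ^ (n + 1) with hgdef
  set S : ℂ → ℂ := fun y => ∑' n : ℕ, (stmt5e a n : ℂ) * y ^ n with hSdef
  set φ : ℂ → ℂ := fun y => S y * Complex.exp (-g y) with hφdef
  have hφderiv : ∀ w ∈ t, HasDerivAt φ 0 w := by
    intro w hw
    have h1 : HasDerivAt S ((∑' n : ℕ, (a (n+1) : ℂ) * w ^ n) * S w) w := by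
      have := hS w hw
      rwa [hkey w hw] at this
    have h2 : HasDerivAt (fun y => Complex.exp (-g y))
        (Complex.exp (-g w) * (-(∑' n : ℕ, (a (n+1) : ℂ) * w ^ n))) w :=
      ((hg w hw).neg).cexp
    have := h1.mul h2
    refine this.congr_deriv ?_
    ring
  have hconst : φ z = φ 0 := by
    haveI : IsRCLikeNormedField ℂ := inferInstance
    refine Convex.is_const_of_fderivWithin_eq_zero (𝕜 := ℂ) (convex_ball (0:ℂ) r)
      (fun w hw => ((hφderiv w hw).differentiableAt).differentiableWithinAt)
      (fun w hw => ?_) hzt h0t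
    rw [fderivWithin_eq_fderiv (ht.uniqueDiffOn w hw) ((hφderiv w hw).differentiableAt)]
    rw [(hφderiv w hw).hasFDerivAt.fderiv]
    ext v
    simp
  have hS0val : S 0 = 1 := by
    rw [hSdef]
    simp only []
    rw [tsum_eq_single 0]
    · simp [stmt5e_zero]
    · intro n hn
      match n with
      | 0 => exact absurd rfl hn
      | n+1 => simp
  have hg0val : g 0 = 0 := by
    rw [hgdef]
    simp only []
    have : (fun n : ℕ => (a (n + 1) / (n + 1) : ℂ) * (0:ℂ) ^ (n + 1)) = fun _ => 0 := by
      funext n; simp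
    rw [this, tsum_zero]
  have hφ0 : φ 0 = 1 := by
    rw [hφdef]; simp only []; rw [hS0val, hg0val]; simp
  have hφz : S z * Complex.exp (-g z) = 1 := by
    have h := hconst.trans hφ0
    simpa [hφdef] using h
  have hexp : Complex.exp (g z) = S z := by
    rw [Complex.exp_neg] at hφz
    exact ((mul_inv_eq_one₀ (Complex.exp_ne_zero _)).1 hφz).symm
  exact hexp

lemma stmt5_tri (d1 d2 : ℝ) (z : ℂ) (hd1 : 0 < d1) (hd2 : 0 < d2)
    (hre : z.re < 1) (hnsq : z.re^2 + z.im^2 ≤ 1) :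
    ‖(d1:ℂ) + (d2:ℂ) * z‖ < d1 + d2 := by
  have key : ‖(d1:ℂ) + (d2:ℂ) * z‖^2 < (d1+d2)^2 := by
    rw [Complex.sq_norm, Complex.normSq_apply]
    simp only [Complex.add_re, Complex.add_im, Complex.mul_re, Complex.mul_im,
      Complex.ofReal_re, Complex.ofReal_im]
    nlinarith [mul_lt_mul_of_pos_left hre (by positivity : (0:ℝ) < 2*d1*d2),
      mul_le_mul_of_nonneg_left hnsq (sq_nonneg d2)]
  nlinarith [key, norm_nonneg ((d1:ℂ) + (d2:ℂ)*z), hd1, hd2]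

theorem stmt_5 (a : ℕ → ℝ) (ℓ : ℕ) (F : ℂ → ℂ)
    (ha_pos : ∀ n, 1 ≤ n → 0 < a n)
    (ha_dec : ∀ n, 1 ≤ n → a (n + 1) ≤ a n)
    (ha1 : a 1 = 1)
    (ha_nonconst : ∃ k, 1 ≤ k ∧ a k < 1)
    (hl : IsLeast {k : ℕ | 1 ≤ k ∧ a k < 1} ℓ)
    (hF_cont : ContinuousOn F (Metric.closedBall (0 : ℂ) 1))
    (hF : ∀ z : ℂ, ‖z‖ < 1 →
      F z = 1 - (1 - z) * Complex.exp (∑' n : ℕ, (a (n + 1) / (n + 1) : ℂ) * z ^ (n + 1))) :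
    ∀ z : ℂ, ‖z‖ ≤ 1 → z ≠ 0 → z ≠ 1 → ‖F z‖ < ‖z‖ ^ ℓ := by
  have ha_le1 : ∀ n, 1 ≤ n → a n ≤ 1 := by
    intro n hn
    induction n with
    | zero => omega
    | succ n ih =>
      match n, ih with
      | 0, _ => rw [ha1]
      | n+1, ih => exact le_trans (ha_dec (n+1) (by omega)) (ih (by omega))
  obtain ⟨⟨hℓ1, haℓ⟩, hℓlb⟩ := hl
  have hℓne1 : ℓ ≠ 1 := by
    intro h
    rw [h, ha1] at haℓ
    exact lt_irrefl 1 haℓ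
  obtain ⟨m, hm⟩ : ∃ m, ℓ = m + 2 := ⟨ℓ - 2, by omega⟩
  subst hm
  have hone : ∀ k, 1 ≤ k → k < m+2 → a k = 1 := by
    intro k h1k hk
    have hub : a k ≤ 1 := ha_le1 k h1k
    have hnlt : ¬ (a k < 1) := fun hlt => absurd (hℓlb ⟨h1k, hlt⟩) (by omega)
    linarith
  have he0 : ∀ n, 0 ≤ stmt5e a n := stmt5e_nonneg a ha_pos
  have hanti : ∀ n, stmt5e a (n+1) ≤ stmt5e a n := stmt5e_antitone a ha_pos ha_dec ha1
  set d : ℕ → ℝ := fun n => stmt5e a n - stmt5e a (n+1) with hddef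
  have hd0 : ∀ n, 0 ≤ d n := fun n => by simp only [hddef]; linarith [hanti n]
  have hdsum_partial : ∀ N, ∑ n ∈ Finset.range N, d n = 1 - stmt5e a N := by
    intro N
    rw [hddef]
    rw [Finset.sum_range_sub' (fun i => stmt5e a i) N, stmt5e_zero]
  have hdsummable : Summable d :=
    summable_of_sum_range_le (c := (1:ℝ)) hd0 (fun N => by rw [hdsum_partial]; linarith [he0 N])
  have hdtsum_le : ∑' n, d n ≤ 1 :=
    Summable.tsum_le_of_sum_range_le (c := (1:ℝ)) hdsummable
      (fun N => by rw [hdsum_partial]; linarith [he0 N])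
  have hdzero : ∀ n, n < m+1 → d n = 0 := by
    intro n hn
    simp only [hddef]
    rw [stmt5e_eq_one a m hone n (by omega), stmt5e_eq_one a m hone (n+1) (by omega)]
    ring
  have hdm1 : 0 < d (m+1) := by
    simp only [hddef]
    rw [stmt5e_gap1 a m hone]
    have : (0:ℝ) < (m:ℝ)+2 := by positivity
    apply div_pos (by linarith [haℓ]) this
  have hdm2 : 0 < d (m+2) := by
    have h := stmt5e_gap2 a m ha_pos ha_dec ha1 hone
    have h2 : (0:ℝ) < (1 - a (m+2)) / (m+3) := by
      have : (0:ℝ) < (m:ℝ)+3 := by positivity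
      apply div_pos (by linarith [haℓ]) this
    simp only [hddef]
    linarith
  -- the power series G
  set G : ℂ → ℂ := fun w => ∑' n : ℕ, ((d n : ℝ) : ℂ) * w ^ (n+1) with hGdef
  have hGbound : ∀ (n : ℕ) (w : ℂ), ‖w‖ ≤ 1 → ‖((d n : ℝ):ℂ) * w ^ (n+1)‖ ≤ d n := by
    intro n w hw
    rw [norm_mul, norm_pow, Complex.norm_real, Real.norm_eq_abs, abs_of_nonneg (hd0 n)]
    calc d n * ‖w‖ ^ (n+1) ≤ d n * 1 :=
          mul_le_mul_of_nonneg_left (pow_le_one₀ (norm_nonneg w) hw) (hd0 n)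
      _ = d n := mul_one _
  have hGsummable : ∀ w : ℂ, ‖w‖ ≤ 1 → Summable (fun n : ℕ => ((d n : ℝ):ℂ) * w ^ (n+1)) :=
    fun w hw => Summable.of_norm_bounded hdsummable (fun n => hGbound n w hw)
  have hGcont : ContinuousOn G (Metric.closedBall (0:ℂ) 1) := by
    apply continuousOn_tsum (u := d) _ hdsummable
    · intro n x hx
      exact hGbound n x (mem_closedBall_zero_iff.mp hx)
    · intro i
      exact (continuous_const.mul (continuous_pow _)).continuousOn
  have hFG : ∀ w : ℂ, ‖w‖ < 1 → F w = G w := by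
    intro w hw
    rw [hF w hw, stmt5_exp a ha_pos ha_dec ha1 ha_le1 w hw]
    have hwle : ‖w‖ ≤ 1 := hw.le
    have hSsummable : Summable (fun n : ℕ => ((stmt5e a n : ℝ):ℂ) * w ^ n) := by
      apply Summable.of_norm_bounded (summable_geometric_of_lt_one (norm_nonneg w) hw)
      intro n
      rw [norm_mul, norm_pow, Complex.norm_real, Real.norm_eq_abs, abs_of_nonneg (he0 n)]
      calc stmt5e a n * ‖w‖ ^ n ≤ 1 * ‖w‖ ^ n :=
            mul_le_mul_of_nonneg_right (stmt5e_le_one a ha_pos ha_dec ha1 n)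
              (pow_nonneg (norm_nonneg w) n)
        _ = ‖w‖ ^ n := one_mul _
    have hSsummable' : Summable (fun n : ℕ => ((stmt5e a (n+1) : ℝ):ℂ) * w ^ (n+1)) :=
      (summable_nat_add_iff (f := fun n : ℕ => ((stmt5e a n : ℝ):ℂ) * w ^ n) 1).2 hSsummable
    have hzS : Summable (fun n : ℕ => ((stmt5e a n : ℝ):ℂ) * w ^ (n+1)) :=
      (hSsummable.mul_left w).congr (fun n => by ring)
    have h1 : ∑' n : ℕ, ((stmt5e a n : ℝ):ℂ) * w ^ n
        = 1 + ∑' n : ℕ, ((stmt5e a (n+1) : ℝ):ℂ) * w ^ (n+1) := by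
      rw [Summable.tsum_eq_zero_add hSsummable]
      simp [stmt5e_zero]
    have h2 : w * ∑' n : ℕ, ((stmt5e a n : ℝ):ℂ) * w ^ n
        = ∑' n : ℕ, ((stmt5e a n : ℝ):ℂ) * w ^ (n+1) := by
      rw [← tsum_mul_left]
      exact tsum_congr (fun n => by ring)
    have h3 : ∑' n : ℕ, ((d n : ℝ):ℂ) * w ^ (n+1)
        = (∑' n : ℕ, ((stmt5e a n : ℝ):ℂ) * w ^ (n+1))
          - ∑' n : ℕ, ((stmt5e a (n+1) : ℝ):ℂ) * w ^ (n+1) := by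
      rw [← Summable.tsum_sub hzS hSsummable']
      apply tsum_congr
      intro n
      simp only [hddef]
      push_cast
      ring
    have expand : (1 - w) * ∑' n : ℕ, ((stmt5e a n : ℝ):ℂ) * w ^ n
        = 1 - ∑' n : ℕ, ((d n : ℝ):ℂ) * w ^ (n+1) := by
      rw [sub_mul, one_mul, h2, h1, h3]
      ring
    rw [expand, hGdef]
    ring
  intro z hz hz0 hz1
  have hFGz : F z = G z := by
    have heq : Set.EqOn F G (Metric.ball (0:ℂ) 1) :=
      fun w hw => hFG w (mem_ball_zero_iff.mp hw)
    have hsub : Metric.closedBall (0:ℂ) 1 ⊆ closure (Metric.ball (0:ℂ) 1) := by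
      rw [closure_ball (0:ℂ) one_ne_zero]
    exact Set.EqOn.of_subset_closure heq hF_cont hGcont Metric.ball_subset_closedBall hsub
      (mem_closedBall_zero_iff.2 hz)
  rw [hFGz]
  -- split G z
  have hsum := hGsummable z hz
  have hGz : G z = (((d (m+1) : ℝ):ℂ) * z ^ (m+2) + ((d (m+2) : ℝ):ℂ) * z ^ (m+3))
      + ∑' n : ℕ, ((d (n+(m+3)) : ℝ):ℂ) * z ^ (n+(m+3)+1) := by
    rw [hGdef]
    simp only []
    rw [← Summable.sum_add_tsum_nat_add (m+3) hsum]
    congr 1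
    rw [Finset.sum_range_succ, Finset.sum_range_succ]
    have hzero : ∑ n ∈ Finset.range (m+1), ((d n : ℝ):ℂ) * z ^ (n+1) = 0 :=
      Finset.sum_eq_zero (fun n hn => by
        rw [hdzero n (Finset.mem_range.mp hn)]; simp)
    rw [hzero, zero_add]
  set T : ℝ := ∑' n : ℕ, d (n+(m+3)) with hTdef
  have hTsummable : Summable (fun n : ℕ => d (n+(m+3))) :=
    (summable_nat_add_iff (f := d) (m+3)).2 hdsummable
  have hT0 : 0 ≤ T := tsum_nonneg (fun n => hd0 _)
  have hsum_le : d (m+1) + d (m+2) + T ≤ 1 := by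
    have hsplit := Summable.sum_add_tsum_nat_add (m+3) hdsummable
    have hfin : ∑ n ∈ Finset.range (m+3), d n = d (m+1) + d (m+2) := by
      rw [Finset.sum_range_succ, Finset.sum_range_succ]
      have hzero : ∑ n ∈ Finset.range (m+1), d n = 0 :=
        Finset.sum_eq_zero (fun n hn => hdzero n (Finset.mem_range.mp hn))
      rw [hzero, zero_add]
    rw [hfin] at hsplit
    rw [← hTdef] at hsplit
    linarith [hdtsum_le, hsplit]
  have hnz : 0 < ‖z‖ := norm_pos_iff.2 hz0
  have hzpow : 0 < ‖z‖ ^ (m+2) := pow_pos hnz _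
  have hRe : z.re < 1 := by
    by_contra hcon
    push_neg at hcon
    have hre : z.re ≤ 1 := le_trans (Complex.re_le_norm z) hz
    have hre1 : z.re = 1 := le_antisymm hre hcon
    have hnsq : Complex.normSq z ≤ 1 := by
      rw [Complex.normSq_eq_norm_sq]
      nlinarith [norm_nonneg z]
    have him : z.im = 0 := by
      have := Complex.normSq_apply z
      nlinarith [this]
    exact hz1 (Complex.ext (by simpa using hre1) (by simpa using him))
  have hhead : ‖((d (m+1) : ℝ):ℂ) * z ^ (m+2) + ((d (m+2) : ℝ):ℂ) * z ^ (m+3)‖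
      < (d (m+1) + d (m+2)) * ‖z‖ ^ (m+2) := by
    have hfact : ((d (m+1) : ℝ):ℂ) * z ^ (m+2) + ((d (m+2) : ℝ):ℂ) * z ^ (m+3)
        = z ^ (m+2) * (((d (m+1) : ℝ):ℂ) + ((d (m+2) : ℝ):ℂ) * z) := by ring
    rw [hfact, norm_mul, norm_pow, mul_comm]
    apply mul_lt_mul_of_pos_right _ hzpow
    have hnsq : z.re^2 + z.im^2 ≤ 1 := by
      have h := Complex.normSq_apply z
      have h2 : Complex.normSq z ≤ 1 := by
        rw [Complex.normSq_eq_norm_sq]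
        nlinarith [norm_nonneg z]
      nlinarith [h]
    exact stmt5_tri (d (m+1)) (d (m+2)) z hdm1 hdm2 hRe hnsq
  have htail : ‖∑' n : ℕ, ((d (n+(m+3)) : ℝ):ℂ) * z ^ (n+(m+3)+1)‖ ≤ T * ‖z‖ ^ (m+2) := by
    have hnormsum : Summable (fun n : ℕ => ‖((d (n+(m+3)) : ℝ):ℂ) * z ^ (n+(m+3)+1)‖) := by
      apply Summable.of_nonneg_of_le (fun n => norm_nonneg _) _ hTsummable
      intro n
      exact hGbound (n+(m+3)) z hz
    calc ‖∑' n : ℕ, ((d (n+(m+3)) : ℝ):ℂ) * z ^ (n+(m+3)+1)‖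
        ≤ ∑' n : ℕ, ‖((d (n+(m+3)) : ℝ):ℂ) * z ^ (n+(m+3)+1)‖ :=
          norm_tsum_le_tsum_norm hnormsum
      _ ≤ ∑' n : ℕ, d (n+(m+3)) * ‖z‖ ^ (m+2) := by
          apply Summable.tsum_le_tsum _ hnormsum (hTsummable.mul_right _)
          intro n
          rw [norm_mul, norm_pow, Complex.norm_real, Real.norm_eq_abs,
            abs_of_nonneg (hd0 _)]
          apply mul_le_mul_of_nonneg_left _ (hd0 _)
          exact pow_le_pow_of_le_one (norm_nonneg z) hz (by omega)
      _ = T * ‖z‖ ^ (m+2) := by rw [tsum_mul_right]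
  calc ‖G z‖ ≤ ‖((d (m+1) : ℝ):ℂ) * z ^ (m+2) + ((d (m+2) : ℝ):ℂ) * z ^ (m+3)‖
        + ‖∑' n : ℕ, ((d (n+(m+3)) : ℝ):ℂ) * z ^ (n+(m+3)+1)‖ := by
        rw [hGz]; exact norm_add_le _ _
    _ < (d (m+1) + d (m+2)) * ‖z‖ ^ (m+2) + T * ‖z‖ ^ (m+2) := by
        apply add_lt_add_of_lt_of_le hhead htail
    _ = (d (m+1) + d (m+2) + T) * ‖z‖ ^ (m+2) := by ring
    _ ≤ 1 * ‖z‖ ^ (m+2) := mul_le_mul_of_nonneg_right hsum_le hzpow.le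
    _ = ‖z‖ ^ (m+2) := one_mul _
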